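/- For every N ≥ 2 and every φ ∈ ℝ with e^{iφ} ≠ 1, the elementary N-qubit LME state with phase φ is SLOCC-equivalent to the N-qubit GHZ state |0⟩^{⊗N} + |1⟩^{⊗N}. -/
import Mathlib


/-- The `N`-qubit GHZ state `|0…0⟩ + |1…1⟩`. -/
noncomputable def GHZ (N : ℕ) : (Fin N → Fin 2) → ℂ :=
  fun f => if (∀ k, f k = 0) ∨ (∀ k, f k = 1) then 1 else 0

/-- The elementary `N`-qubit LME state with phase `φ`: coefficient `e^{iφ}` on `|1…1⟩`
and `1` on every other computational basis vector. -/
noncomputable def elementaryLME (N : ℕ) (φ : ℝ) : (Fin N → Fin 2) → ℂ :=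
  fun f => if ∀ k, f k = 1 then Complex.exp (φ * Complex.I) else 1

/-- For `N ≥ 2` and `e^{iφ} ≠ 1`, the elementary `N`-qubit LME state is
SLOCC-equivalent to the `N`-qubit GHZ state. -/
theorem elementaryLME_slocc_equiv_ghz (N : ℕ) (hN : 2 ≤ N) (φ : ℝ)
    (hφ : Complex.exp (φ * Complex.I) ≠ 1) :
    ∃ A : Fin N → Matrix (Fin 2) (Fin 2) ℂ,
      (∀ k, IsUnit (A k)) ∧
      ∀ f : Fin N → Fin 2,
        GHZ N f = ∑ g : Fin N → Fin 2, (∏ k, A k (f k) (g k)) * elementaryLME N φ g := by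
  have hN0 : 0 < N := by omega
  set c : ℂ := Complex.exp (φ * Complex.I) - 1 with hc
  have hc0 : c ≠ 0 := sub_ne_zero.mpr hφ
  set lam : Fin N → ℂ := fun k => if k = ⟨0, hN0⟩ then c⁻¹ else 1 with hlam
  have hlam0 : ∀ k, lam k ≠ 0 := by
    intro k; simp only [hlam]; split
    · exact inv_ne_zero hc0
    · exact one_ne_zero
  refine ⟨fun k => !![1, 0; -lam k, lam k], ?_, ?_⟩
  · intro k
    rw [Matrix.isUnit_iff_isUnit_det]
    have : (!![1, 0; -lam k, lam k] : Matrix (Fin 2) (Fin 2) ℂ).det = lam k := by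
      simp [Matrix.det_fin_two_of]
    rw [this]
    exact (hlam0 k).isUnit
  · intro f
    -- decompose elementaryLME as sum of two product states
    have hdecomp : ∀ g : Fin N → Fin 2,
        elementaryLME N φ g =
          (∏ _k : Fin N, (1 : ℂ)) + c * ∏ k, (if g k = 1 then (1:ℂ) else 0) := by
      intro g
      rw [elementaryLME]
      by_cases h : ∀ k, g k = 1
      · rw [if_pos h]
        have hp : ∏ k, (if g k = 1 then (1:ℂ) else 0) = 1 :=
          Finset.prod_eq_one fun k _ => if_pos (h k)
        rw [hp]
        simp [hc]
      · rw [if_neg h]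
        push_neg at h
        obtain ⟨k, hk⟩ := h
        have hz : (∏ k, if g k = 1 then (1:ℂ) else 0) = 0 :=
          Finset.prod_eq_zero (Finset.mem_univ k)
            (if_neg hk : (if g k = 1 then (1:ℂ) else 0) = 0)
        rw [hz]
        simp
    have key : ∑ g : Fin N → Fin 2, (∏ k, (!![1, 0; -lam k, lam k] : Matrix (Fin 2) (Fin 2) ℂ) (f k) (g k)) * elementaryLME N φ g
        = (∏ k, ∑ j : Fin 2, (!![1, 0; -lam k, lam k] : Matrix (Fin 2) (Fin 2) ℂ) (f k) j * 1)
          + c * ∏ k, ∑ j : Fin 2, (!![1, 0; -lam k, lam k] : Matrix (Fin 2) (Fin 2) ℂ) (f k) j * (if j = 1 then (1:ℂ) else 0) := by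
      simp only [hdecomp, mul_add, Finset.sum_add_distrib]
      congr 1
      · rw [Fintype.prod_sum fun k j => (!![1, 0; -lam k, lam k] : Matrix (Fin 2) (Fin 2) ℂ) (f k) j * 1]
        apply Finset.sum_congr rfl
        intro g _
        rw [← Finset.prod_mul_distrib]
      · rw [Fintype.prod_sum fun k j => (!![1, 0; -lam k, lam k] : Matrix (Fin 2) (Fin 2) ℂ) (f k) j * (if j = 1 then (1:ℂ) else 0)]
        rw [Finset.mul_sum]
        apply Finset.sum_congr rfl
        intro g _
        rw [Finset.prod_mul_distrib]
        ring
    rw [key]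
    have h1 : ∀ k, (∑ j : Fin 2, (!![1, 0; -lam k, lam k] : Matrix (Fin 2) (Fin 2) ℂ) (f k) j * 1)
        = if f k = 0 then 1 else 0 := by
      intro k
      have : f k = 0 ∨ f k = 1 := by omega
      rcases this with h | h <;> simp [h, Fin.sum_univ_two]
    have h2 : ∀ k, (∑ j : Fin 2, (!![1, 0; -lam k, lam k] : Matrix (Fin 2) (Fin 2) ℂ) (f k) j * (if j = 1 then (1:ℂ) else 0))
        = if f k = 1 then lam k else 0 := by
      intro k
      have : f k = 0 ∨ f k = 1 := by omega
      rcases this with h | h <;> simp [h, Fin.sum_univ_two]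
    simp only [h1, h2]
    have hprodlam : ∏ k, lam k = c⁻¹ := by
      rw [hlam, Finset.prod_ite_eq' Finset.univ (⟨0, hN0⟩ : Fin N) (fun _ => c⁻¹)]
      simp
    by_cases h0 : ∀ k, f k = 0
    · have hk0 : f ⟨0, hN0⟩ ≠ 1 := by rw [h0 ⟨0, hN0⟩]; decide
      have hz : (∏ k, if f k = 1 then lam k else 0) = 0 :=
        Finset.prod_eq_zero (Finset.mem_univ ⟨0, hN0⟩)
          (if_neg hk0 : (if f ⟨0, hN0⟩ = 1 then lam ⟨0, hN0⟩ else 0) = 0)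
      have ho : (∏ k, if f k = 0 then (1:ℂ) else 0) = 1 :=
        Finset.prod_eq_one fun k _ => if_pos (h0 k)
      rw [hz, ho, GHZ, if_pos (Or.inl h0)]
      ring
    · by_cases h1' : ∀ k, f k = 1
      · have hp : (∏ k, if f k = 1 then lam k else 0) = c⁻¹ := by
          rw [← hprodlam]; exact Finset.prod_congr rfl fun k _ => if_pos (h1' k)
        push_neg at h0
        obtain ⟨k, hk⟩ := h0
        have hz : (∏ k, if f k = 0 then (1:ℂ) else 0) = 0 :=
          Finset.prod_eq_zero (Finset.mem_univ k)
            (if_neg hk : (if f k = 0 then (1:ℂ) else 0) = 0)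
        rw [hp, hz, GHZ, if_pos (Or.inr h1'), mul_inv_cancel₀ hc0]
        ring
      · push_neg at h0
        obtain ⟨k, hk⟩ := h0
        obtain ⟨k', hk'⟩ := not_forall.mp h1'
        have hz1 : (∏ k, if f k = 0 then (1:ℂ) else 0) = 0 :=
          Finset.prod_eq_zero (Finset.mem_univ k)
            (if_neg hk : (if f k = 0 then (1:ℂ) else 0) = 0)
        have hz2 : (∏ k, if f k = 1 then lam k else 0) = 0 :=
          Finset.prod_eq_zero (Finset.mem_univ k')
            (if_neg hk' : (if f k' = 1 then lam k' else 0) = 0)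
        rw [hz1, hz2, GHZ, if_neg (by push_neg; exact ⟨⟨k, hk⟩, ⟨k', hk'⟩⟩)]
        ring
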